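/- Let λ be a nonnegative random variable, λ_Th ≥ 0, P_peak > 0, P_x = P_peak·1{λ ≥ λ_Th}, and let P_z be any random variable with 0 ≤ P_z ≤ P_peak a.s. and E[P_z] ≤ E[P_x]. Then E[λ·P_z] ≤ E[λ·P_x]; i.e., the threshold policy maximizes expected weighted received power among all policies with the same or smaller average transmit power. -/
import Mathlib


open MeasureTheory

/-- The threshold policy `Px = P_peak·1{λ ≥ λ_Th}` maximizes the expected
channel-weighted received power among all policies `Pz` with
`0 ≤ Pz ≤ P_peak` and average transmit power at most that of `Px`. -/
theorem threshold_policy_optimality {Ω : Type*} [MeasurableSpace Ω]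
    (μ : Measure Ω) [IsProbabilityMeasure μ]
    (lam Pz Px : Ω → ℝ) (lamTh Ppeak : ℝ)
    (hlamTh : 0 ≤ lamTh) (hPpeak : 0 < Ppeak)
    (hlam : ∀ ω, 0 ≤ lam ω)
    (hPz0 : ∀ ω, 0 ≤ Pz ω) (hPzpeak : ∀ ω, Pz ω ≤ Ppeak)
    (hPx : Px = fun ω => if lamTh ≤ lam ω then Ppeak else 0)
    (hintPz : Integrable Pz μ) (hintPx : Integrable Px μ)
    (hintlamPz : Integrable (fun ω => lam ω * Pz ω) μ)
    (hintlamPx : Integrable (fun ω => lam ω * Px ω) μ)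
    (hle : ∫ ω, Pz ω ∂μ ≤ ∫ ω, Px ω ∂μ) :
    ∫ ω, lam ω * Pz ω ∂μ ≤ ∫ ω, lam ω * Px ω ∂μ := by
  have key : ∀ ω, lam ω * Pz ω - lam ω * Px ω ≤ lamTh * Pz ω - lamTh * Px ω := by
    intro ω
    subst hPx
    by_cases h : lamTh ≤ lam ω
    · simp only [if_pos h]
      nlinarith [hPzpeak ω, hlam ω, hPz0 ω]
    · simp only [if_neg h]
      push_neg at h
      nlinarith [hPz0 ω, hlam ω]
  have h1 : ∫ ω, (lam ω * Pz ω - lam ω * Px ω) ∂μ ≤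
      ∫ ω, (lamTh * Pz ω - lamTh * Px ω) ∂μ := by
    refine integral_mono (hintlamPz.sub hintlamPx)
      ((hintPz.const_mul lamTh).sub (hintPx.const_mul lamTh)) key
  rw [integral_sub hintlamPz hintlamPx, integral_sub (hintPz.const_mul lamTh)
      (hintPx.const_mul lamTh), integral_const_mul, integral_const_mul] at h1
  nlinarith [mul_le_mul_of_nonneg_left hle hlamTh]
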